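/- Let Γ be a finite ordered weighted tree with negative definite intersection matrix. Then there exists a real-valued map h on the vertices of Γ with h(v) < 0 for all v, such that: (1) if v is a minimal element, then h(v) = w(v); and (2) if v is not minimal and v_{i_1},...,v_{i_r} are its immediate predecessors, then h(v) = w(v) - Σ_{j=1}^{r} 1/h(v_{i_j}). -/

import Mathlib

open Matrix

set_option linter.unusedSectionVars false
set_option linter.unusedVariables false
set_option linter.unnecessarySimpa false
set_option maxHeartbeats 1000000

/-- A real symmetric matrix is negative definite if the associated quadratic form
is negative on nonzero vectors. -/
def IsNegDef {m : ℕ} (A : Matrix (Fin m) (Fin m) ℝ) : Prop :=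
  A.IsSymm ∧ ∀ x : Fin m → ℝ, x ≠ 0 → x ⬝ᵥ A.mulVec x < 0

/-- The immediate predecessors of a vertex `v` of a tree ordered towards a fixed
root `r`: the neighbours of `v` lying farther from `r` than `v`. -/
noncomputable def Preds {m : ℕ} (G : SimpleGraph (Fin m)) [DecidableRel G.Adj] (r v : Fin m) :
    Finset (Fin m) :=
  Finset.univ.filter fun u => G.Adj u v ∧ G.dist r u = G.dist r v + 1


section TreeAux
variable {V : Type*} [Fintype V] [DecidableEq V] {G : SimpleGraph V}

lemma path_length_eq_dist (hG : G.IsTree) {a b : V} (p : G.Walk a b) (hp : p.IsPath) :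
    p.length = G.dist a b := by
  obtain ⟨q, hq, hql⟩ := hG.isConnected.exists_path_of_dist a b
  have := hG.IsAcyclic.path_unique ⟨p, hp⟩ ⟨q, hq⟩
  rw [Subtype.ext_iff] at this
  simp only at this
  rw [this, hql]

lemma dist_add_dist_of_mem_path (hG : G.IsTree) {a b s : V} (p : G.Walk a b) (hp : p.IsPath)
    (hs : s ∈ p.support) : G.dist a s + G.dist s b = G.dist a b := by
  have h1 := path_length_eq_dist hG _ (hp.takeUntil hs)
  have h2 := path_length_eq_dist hG _ (hp.dropUntil hs)
  have h3 := congr_arg SimpleGraph.Walk.length (p.take_spec hs)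
  rw [SimpleGraph.Walk.length_append] at h3
  rw [h1, h2] at h3
  rw [h3, path_length_eq_dist hG p hp]
end TreeAux

set_option linter.unusedSectionVars false

section SubtreeAux
variable {V : Type*} [Fintype V] [DecidableEq V] {G : SimpleGraph V} {r v u u' t t' s : V}

/-- `Sw r u t` : the geodesic from `r` to `t` passes through `u`. -/
def Sw (G : SimpleGraph V) (r u t : V) : Prop := G.dist r t = G.dist r u + G.dist u t

lemma dist_le_one_of_adj (h : G.Adj v t) : G.dist v t ≤ 1 := by
  simpa using SimpleGraph.dist_le h.toWalk

lemma sw_self (G : SimpleGraph V) (r u : V) : Sw G r u u := by simp [Sw]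

/-- A predecessor relation: `Adj u v` and `dist r u = dist r v + 1`. -/
lemma not_sw_base (hG : G.IsTree) (hu : G.Adj u v ∧ G.dist r u = G.dist r v + 1) :
    ¬ Sw G r u v := by
  intro h
  rw [Sw, hu.2] at h
  omega

lemma K_lemma (hG : G.IsTree) (hu : G.Adj u v ∧ G.dist r u = G.dist r v + 1)
    (ht : Sw G r u t) : G.dist v t = 1 + G.dist u t := by
  have hconn := hG.isConnected
  have h1 : G.dist v t ≤ 1 + G.dist u t := by
    calc G.dist v t ≤ G.dist v u + G.dist u t := hconn.dist_triangle
    _ ≤ 1 + G.dist u t := by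
        have := dist_le_one_of_adj hu.1.symm; omega
  have h2 : G.dist r t ≤ G.dist r v + G.dist v t := hconn.dist_triangle
  rw [Sw, hu.2] at ht
  omega

/-- key adjacency-exclusion: if `t` lies in the subtree of `u` and `t ≠ u`,
then `t` is not adjacent to `v` and `t ≠ v`. -/
lemma sw_not_adj (hG : G.IsTree) (hu : G.Adj u v ∧ G.dist r u = G.dist r v + 1)
    (ht : Sw G r u t) (htu : t ≠ u) : t ≠ v ∧ ¬ G.Adj v t := by
  have hconn := hG.isConnected
  rw [Sw, hu.2] at ht
  constructor
  · rintro rfl; omega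
  · intro hadj
    have h1 : G.dist r t ≤ G.dist r v + 1 := by
      have := hconn.dist_triangle (u := r) (v := v) (w := t)
      have := dist_le_one_of_adj hadj; omega
    have : G.dist u t = 0 := by omega
    rw [hconn.dist_eq_zero_iff] at this
    exact htu this.symm
end SubtreeAux

section PathAux
variable {V : Type*} [Fintype V] [DecidableEq V] {G : SimpleGraph V} {r v u u' t t' s : V}

lemma E_lemma (hG : G.IsTree) (hu : G.Adj u v ∧ G.dist r u = G.dist r v + 1)
    (ht : Sw G r u t) :
    ∃ p : G.Walk v t, p.IsPath ∧ p.length = G.dist v t ∧ p.getVert 1 = u ∧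
      ∀ s ∈ p.support, s = v ∨ Sw G r u s := by
  have hconn := hG.isConnected
  obtain ⟨q, hq, hql⟩ := hconn.exists_path_of_dist u t
  have hvq : v ∉ q.support := by
    intro hv
    have := dist_add_dist_of_mem_path hG q hq hv
    have hK := K_lemma hG hu ht
    have h1 : 1 ≤ G.dist u v := by
      have : u ≠ v := fun h => by rw [h] at hu; simp at hu
      have := hconn.pos_dist_of_ne this; omega
    omega
  refine ⟨SimpleGraph.Walk.cons hu.1.symm q, hq.cons hvq, ?_, ?_, ?_⟩
  · rw [SimpleGraph.Walk.length_cons, hql, K_lemma hG hu ht]; omega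
  · rw [SimpleGraph.Walk.getVert_cons_succ, SimpleGraph.Walk.getVert_zero]
  · intro s hs
    rw [SimpleGraph.Walk.support_cons, List.mem_cons] at hs
    rcases hs with rfl | hs
    · exact Or.inl rfl
    · right
      have hseg := dist_add_dist_of_mem_path hG q hq hs
      have h1 : G.dist r s ≤ G.dist r u + G.dist u s := hconn.dist_triangle
      have h2 : G.dist r t ≤ G.dist r s + G.dist s t := hconn.dist_triangle
      rw [Sw] at ht ⊢
      omega

lemma D_lemma (hG : G.IsTree) (hu : G.Adj u v ∧ G.dist r u = G.dist r v + 1)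
    (hu' : G.Adj u' v ∧ G.dist r u' = G.dist r v + 1) (huu' : u ≠ u')
    (hs : Sw G r u s) (hs' : Sw G r u' s) : False := by
  obtain ⟨p, hp, _, hg, _⟩ := E_lemma hG hu hs
  obtain ⟨p', hp', _, hg', _⟩ := E_lemma hG hu' hs'
  have := hG.IsAcyclic.path_unique ⟨p, hp⟩ ⟨p', hp'⟩
  rw [Subtype.ext_iff] at this
  simp only at this
  rw [this, hg'] at hg
  exact huu' hg.symm
end PathAux

section NotAdjAux
variable {V : Type*} [Fintype V] [DecidableEq V] {G : SimpleGraph V} {r v u u' t t' s : V}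

lemma not_adj_lemma (hG : G.IsTree) (hu : G.Adj u v ∧ G.dist r u = G.dist r v + 1)
    (hu' : G.Adj u' v ∧ G.dist r u' = G.dist r v + 1) (huu' : u ≠ u')
    (ht : Sw G r u t) (ht' : Sw G r u' t') : t ≠ t' ∧ ¬ G.Adj t t' := by
  have hconn := hG.isConnected
  have hne : t ≠ t' := by rintro rfl; exact D_lemma hG hu hu' huu' ht ht'
  refine ⟨hne, fun hadj => ?_⟩
  obtain ⟨p, hp, hpl, _, hps⟩ := E_lemma hG hu ht
  obtain ⟨p', hp', hpl', _, hps'⟩ := E_lemma hG hu' ht'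
  set W : G.Walk t t' := p.reverse.append p' with hW
  have hvtail : v ∉ p'.support.tail := by
    have h1 := hp'.support_nodup
    rw [p'.support_eq_cons] at h1
    exact (List.nodup_cons.mp h1).1
  have hWpath : W.IsPath := by
    rw [SimpleGraph.Walk.isPath_def, SimpleGraph.Walk.support_append,
      SimpleGraph.Walk.support_reverse]
    refine List.Nodup.append (List.nodup_reverse.mpr hp.support_nodup)
      ((List.tail_sublist _).nodup hp'.support_nodup) ?_
    intro s hs hs'
    rw [List.mem_reverse] at hs
    have h1 := hps s hs
    have h2 := hps' s ((List.tail_sublist _).mem hs')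
    rcases h2 with rfl | h2
    · exact hvtail hs'
    rcases h1 with rfl | h1
    · exact not_sw_base hG hu' h2
    · exact D_lemma hG hu hu' huu' h1 h2
  have hEpath : (SimpleGraph.Walk.cons hadj SimpleGraph.Walk.nil : G.Walk t t').IsPath := by
    simp [SimpleGraph.Walk.isPath_def, hne]
  have := hG.IsAcyclic.path_unique ⟨W, hWpath⟩ ⟨_, hEpath⟩
  rw [Subtype.ext_iff] at this
  simp only at this
  have hlen := congr_arg SimpleGraph.Walk.length this
  rw [SimpleGraph.Walk.length_cons, SimpleGraph.Walk.length_nil, hW,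
    SimpleGraph.Walk.length_append, SimpleGraph.Walk.length_reverse, hpl, hpl'] at hlen
  have k1 := K_lemma hG hu ht
  have k2 := K_lemma hG hu' ht'
  omega
end NotAdjAux

lemma mem_Preds {m : ℕ} {G : SimpleGraph (Fin m)} [DecidableRel G.Adj] {r v u : Fin m} :
    u ∈ Preds G r v ↔ G.Adj u v ∧ G.dist r u = G.dist r v + 1 := by
  simp [Preds]

noncomputable def Haux {m : ℕ} (G : SimpleGraph (Fin m)) [DecidableRel G.Adj] (r : Fin m)
    (w : Fin m → ℝ) : ℕ → Fin m → ℝ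
  | 0 => w
  | (k+1) => fun v => w v - ∑ u ∈ Preds G r v, 1 / Haux G r w k u

lemma Haux_zero {m : ℕ} {G : SimpleGraph (Fin m)} [DecidableRel G.Adj] {r : Fin m}
    {w : Fin m → ℝ} {v : Fin m} : Haux G r w 0 v = w v := rfl

lemma Haux_succ {m : ℕ} {G : SimpleGraph (Fin m)} [DecidableRel G.Adj] {r : Fin m}
    {w : Fin m → ℝ} {k : ℕ} {v : Fin m} :
    Haux G r w (k+1) v = w v - ∑ u ∈ Preds G r v, 1 / Haux G r w k u := rfl

lemma dotProduct_mulVec_sum {m : ℕ} {ι : Type*} (A : Matrix (Fin m) (Fin m) ℝ) (a : Fin m → ℝ)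
    (P : Finset ι) (f : ι → Fin m → ℝ) :
    a ⬝ᵥ A.mulVec (∑ u ∈ P, f u) = ∑ u ∈ P, a ⬝ᵥ A.mulVec (f u) := by
  induction P using Finset.cons_induction with
  | empty => simp
  | cons i P hi ih => simp [Finset.sum_cons, Matrix.mulVec_add, dotProduct_add, ih]

lemma sum_dotProduct_mulVec {m : ℕ} {ι : Type*} (A : Matrix (Fin m) (Fin m) ℝ) (a : Fin m → ℝ)
    (P : Finset ι) (f : ι → Fin m → ℝ) :
    (∑ u ∈ P, f u) ⬝ᵥ A.mulVec a = ∑ u ∈ P, (f u) ⬝ᵥ A.mulVec a := by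
  induction P using Finset.cons_induction with
  | empty => simp
  | cons i P hi ih => simp [Finset.sum_cons, add_dotProduct, ih]

/-- Proposition 7 of the paper: on a finite ordered weighted tree (root `r`)
whose intersection matrix is negative definite, there is a negative real map `h`
on the vertices with `h v = w v` for minimal `v` and
`h v = w v − Σ 1/h(u)` over the immediate predecessors `u` of `v` otherwise. -/
theorem stmt_0 (m : ℕ) (hm : 0 < m) (G : SimpleGraph (Fin m)) [DecidableRel G.Adj]
    (hG : G.IsTree) (r : Fin m)
    (w : Fin m → ℝ) (hw : ∀ v, w v ≠ 0)
    (A : Matrix (Fin m) (Fin m) ℝ)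
    (hdiag : ∀ v, A v v = w v)
    (hoff : ∀ i j, i ≠ j → A i j = if G.Adj i j then 1 else 0)
    (hneg : IsNegDef A) :
    ∃ h : Fin m → ℝ, (∀ v, h v < 0) ∧
      ∀ v, h v = w v - ∑ u ∈ Preds G r v, 1 / h u := by
  classical
  have hconn := hG.isConnected
  set h : Fin m → ℝ := fun v => Haux G r w (m - 1 - G.dist r v) v with hh
  have hdb : ∀ v : Fin m, G.dist r v + 1 ≤ m := by
    intro v
    obtain ⟨p, hp, hl⟩ := hconn.exists_path_of_dist r v
    have := hp.length_lt
    rw [hl, Fintype.card_fin] at this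
    omega
  have hrec : ∀ v, h v = w v - ∑ u ∈ Preds G r v, 1 / h u := by
    intro v
    by_cases hP : Preds G r v = ∅
    · rw [hP, Finset.sum_empty, sub_zero]
      show Haux G r w (m - 1 - G.dist r v) v = w v
      cases hk : (m - 1 - G.dist r v) with
      | zero => rw [Haux_zero]
      | succ k => rw [Haux_succ, hP, Finset.sum_empty, sub_zero]
    · obtain ⟨u0, hu0⟩ := Finset.nonempty_iff_ne_empty.mpr hP
      have hu0' := (mem_Preds.mp hu0).2
      have hdv : G.dist r v + 2 ≤ m := by have := hdb u0; omega
      have hk : m - 1 - G.dist r v = (m - 2 - G.dist r v) + 1 := by omega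
      show Haux G r w (m - 1 - G.dist r v) v
        = w v - ∑ u ∈ Preds G r v, 1 / Haux G r w (m - 1 - G.dist r u) u
      rw [hk, Haux_succ]
      congr 1
      apply Finset.sum_congr rfl
      intro u hu
      have h2 : m - 1 - G.dist r u = m - 2 - G.dist r v := by
        have := (mem_Preds.mp hu).2; omega
      rw [h2]
  -- main induction
  have main : ∀ k : ℕ, ∀ v : Fin m, m - G.dist r v ≤ k →
      h v < 0 ∧ ∃ x : Fin m → ℝ, x v = 1 ∧ (∀ t, x t ≠ 0 → Sw G r v t) ∧
        x ⬝ᵥ A.mulVec x = h v := by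
    intro k
    induction k with
    | zero => intro v hv; exact absurd hv (by have := hdb v; omega)
    | succ k ih =>
      intro v hv
      set P := Preds G r v with hPdef
      have IH : ∀ u, u ∈ P → h u < 0 ∧ ∃ x : Fin m → ℝ, x u = 1 ∧
          (∀ t, x t ≠ 0 → Sw G r u t) ∧ x ⬝ᵥ A.mulVec x = h u := by
        intro u hu
        have h2 := (mem_Preds.mp hu).2
        exact ih u (by omega)
      choose hPneg hex using IH
      choose y hy1 hysupp hyQ using hex
      set Y : Fin m → Fin m → ℝ := fun u => if hu : u ∈ P then y u hu else 0 with hYdef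
      have hYeq : ∀ u (hu : u ∈ P), Y u = y u hu := by
        intro u hu; rw [hYdef]; simp [hu]
      have hY1 : ∀ u (hu : u ∈ P), Y u u = 1 := by
        intro u hu; rw [hYeq u hu]; exact hy1 u hu
      have hYsupp : ∀ u (hu : u ∈ P), ∀ t, Y u t ≠ 0 → Sw G r u t := by
        intro u hu t ht; rw [hYeq u hu] at ht; exact hysupp u hu t ht
      have hYQ : ∀ u (hu : u ∈ P), Y u ⬝ᵥ A.mulVec (Y u) = h u := by
        intro u hu; rw [hYeq u hu]; exact hyQ u hu
      set c : Fin m → ℝ := fun u => -(1 / h u) with hc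
      set x : Fin m → ℝ := (Pi.single v 1 : Fin m → ℝ) + ∑ u ∈ P, c u • Y u with hx
      have hBsymm : ∀ a b : Fin m → ℝ, a ⬝ᵥ A.mulVec b = b ⬝ᵥ A.mulVec a := by
        intro a b
        rw [Matrix.dotProduct_mulVec, ← Matrix.mulVec_transpose, hneg.1.eq,
          dotProduct_comm]
      have hBe : ∀ z : Fin m → ℝ, (Pi.single v 1 : Fin m → ℝ) ⬝ᵥ A.mulVec z
          = ∑ t, A v t * z t := by
        intro z
        rw [single_dotProduct, one_mul]
        simp [Matrix.mulVec, dotProduct]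
      have hC2 : ∀ u (hu : u ∈ P), (Pi.single v 1 : Fin m → ℝ) ⬝ᵥ A.mulVec (Y u) = 1 := by
        intro u hu
        have hu' := mem_Preds.mp hu
        rw [hBe, Finset.sum_eq_single u]
        · rw [hY1 u hu, hoff v u (Ne.symm hu'.1.ne), if_pos hu'.1.symm, mul_one]
        · intro t _ htu
          by_cases h0 : Y u t = 0
          · rw [h0, mul_zero]
          · have hsw := hYsupp u hu t h0
            obtain ⟨h1, h2⟩ := sw_not_adj hG hu' hsw htu
            rw [hoff v t (Ne.symm h1), if_neg h2, zero_mul]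
        · intro hmem; exact absurd (Finset.mem_univ u) hmem
      have hC3 : ∀ u (hu : u ∈ P) u' (hu' : u' ∈ P), u ≠ u' →
          Y u ⬝ᵥ A.mulVec (Y u') = 0 := by
        intro u hu u' hu' hne
        simp only [dotProduct, Matrix.mulVec]
        apply Finset.sum_eq_zero
        intro t _
        by_cases h0 : Y u t = 0
        · rw [h0, zero_mul]
        · apply mul_eq_zero_of_right
          apply Finset.sum_eq_zero
          intro s _
          by_cases h0' : Y u' s = 0
          · rw [h0', mul_zero]
          · have hswt := hYsupp u hu t h0
            have hsws := hYsupp u' hu' s h0'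
            obtain ⟨hne', hnadj⟩ :=
              not_adj_lemma hG (mem_Preds.mp hu) (mem_Preds.mp hu') hne hswt hsws
            rw [hoff t s hne', if_neg hnadj, zero_mul]
      have hAe : ∀ a : Fin m → ℝ, a ⬝ᵥ A.mulVec x
          = a ⬝ᵥ A.mulVec (Pi.single v 1) + ∑ u ∈ P, c u * (a ⬝ᵥ A.mulVec (Y u)) := by
        intro a
        rw [hx, Matrix.mulVec_add, dotProduct_add, dotProduct_mulVec_sum]
        congr 1
        apply Finset.sum_congr rfl
        intro u _
        rw [Matrix.mulVec_smul, dotProduct_smul, smul_eq_mul]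
      have hee : (Pi.single v 1 : Fin m → ℝ) ⬝ᵥ A.mulVec (Pi.single v 1) = w v := by
        rw [single_dotProduct, one_mul, Matrix.mulVec_single]
        simp [hdiag]
      have e1 : (Pi.single v 1 : Fin m → ℝ) ⬝ᵥ A.mulVec x = w v + ∑ u ∈ P, c u := by
        rw [hAe, hee]
        congr 1
        apply Finset.sum_congr rfl
        intro u hu
        rw [hC2 u hu, mul_one]
      have e2 : ∀ u (hu : u ∈ P), Y u ⬝ᵥ A.mulVec x = 1 + c u * h u := by
        intro u hu
        rw [hAe]
        congr 1
        · rw [hBsymm (Y u) (Pi.single v 1), hC2 u hu]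
        · rw [Finset.sum_eq_single u]
          · rw [hYQ u hu]
          · intro u' hu' hne
            rw [hC3 u hu u' hu' (Ne.symm hne), mul_zero]
          · intro hmem; exact absurd hu hmem
      have hxQ : x ⬝ᵥ A.mulVec x = h v := by
        have expand : x ⬝ᵥ A.mulVec x
            = (Pi.single v 1 : Fin m → ℝ) ⬝ᵥ A.mulVec x
              + ∑ u ∈ P, c u * (Y u ⬝ᵥ A.mulVec x) := by
          nth_rewrite 1 [hx]
          rw [add_dotProduct, sum_dotProduct_mulVec]
          congr 1
          apply Finset.sum_congr rfl
          intro u _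
          rw [smul_dotProduct, smul_eq_mul]
        have step : ∀ u ∈ P, c u + c u * (1 + c u * h u) = -(1 / h u) := by
          intro u hu
          have hne0 : h u ≠ 0 := ne_of_lt (hPneg u hu)
          show -(1 / h u) + -(1 / h u) * (1 + -(1 / h u) * h u) = -(1 / h u)
          field_simp
          ring
        have hsum2 : ∑ u ∈ P, c u * (Y u ⬝ᵥ A.mulVec x)
            = ∑ u ∈ P, c u * (1 + c u * h u) :=
          Finset.sum_congr rfl (fun u hu => by rw [e2 u hu])
        have hsum3 : ∑ u ∈ P, (c u + c u * (1 + c u * h u)) = ∑ u ∈ P, -(1 / h u) :=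
          Finset.sum_congr rfl step
        rw [expand, e1, hsum2, add_assoc, ← Finset.sum_add_distrib, hsum3, hrec v,
          Finset.sum_neg_distrib]
        ring
      have hYv : ∀ u (hu : u ∈ P), Y u v = 0 := by
        intro u hu
        by_contra h0
        exact not_sw_base hG (mem_Preds.mp hu) (hYsupp u hu v h0)
      have hxv : x v = 1 := by
        rw [hx]
        simp only [Pi.add_apply, Finset.sum_apply, Pi.smul_apply, smul_eq_mul,
          Pi.single_eq_same]
        rw [Finset.sum_eq_zero (fun u hu => by rw [hYv u hu, mul_zero]), add_zero]
      have hxsupp : ∀ t, x t ≠ 0 → Sw G r v t := by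
        intro t ht0
        by_cases htv : t = v
        · subst htv; exact sw_self G r t
        · rw [hx] at ht0
          simp only [Pi.add_apply, Finset.sum_apply, Pi.smul_apply, smul_eq_mul,
            Pi.single_eq_of_ne htv, zero_add] at ht0
          obtain ⟨u, hu, hterm⟩ := Finset.exists_ne_zero_of_sum_ne_zero ht0
          have hyt : Y u t ≠ 0 := right_ne_zero_of_mul hterm
          have hsw := hYsupp u hu t hyt
          have hu' := mem_Preds.mp hu
          have hK := K_lemma hG hu' hsw
          rw [Sw] at hsw ⊢
          rw [hu'.2] at hsw
          omega
      have hxne : x ≠ 0 := by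
        intro h0
        have := hxv
        rw [h0] at this
        simpa using this
      have hneg' := hneg.2 x hxne
      rw [hxQ] at hneg'
      exact ⟨hneg', x, hxv, hxsupp, hxQ⟩
  exact ⟨h, fun v => (main m v (Nat.sub_le _ _)).1, hrec⟩
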